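/- A ring R is a CSNC ring if and only if for every clean element a of R there exists a unique idempotent e of R such that a - e is nilpotent and ae = ea. -/

import Mathlib

/-- An element `a` of a ring is *clean* if `a = e + u` for some idempotent `e` and unit `u`. -/
def IsCleanElem {R : Type*} [Ring R] (a : R) : Prop :=
  ∃ e u : R, IsIdempotentElem e ∧ IsUnit u ∧ a = e + u

/-- An element `a` of a ring is *strongly nil-clean* if `a = e + q` for some idempotent `e`
and nilpotent `q` with `e * q = q * e`. -/
def IsStronglyNilCleanElem {R : Type*} [Ring R] (a : R) : Prop :=
  ∃ e q : R, IsIdempotentElem e ∧ IsNilpotent q ∧ e * q = q * e ∧ a = e + q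

/-- A ring is a *CSNC ring* if every clean element is strongly nil-clean. -/
def IsCSNCRing (R : Type*) [Ring R] : Prop :=
  ∀ a : R, IsCleanElem a → IsStronglyNilCleanElem a

/-- If `a - a²` is nilpotent, there is an idempotent `g`, polynomial in `a` (hence commuting
with everything commuting with `a`), such that `a - g` is nilpotent. -/
theorem exists_canonical_idem {R : Type*} [Ring R] (a : R) (h : IsNilpotent (a - a ^ 2)) :
    ∃ g : R, IsIdempotentElem g ∧ IsNilpotent (a - g) ∧
      ∀ y : R, Commute y a → Commute y g := by
  obtain ⟨n, hn⟩ := h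
  have hm : (a - a ^ 2) ^ (n + 1) = 0 := by rw [pow_succ, hn, zero_mul]
  set m := n + 1 with hmdef
  refine ⟨1 - (1 - a ^ m) ^ m, isIdempotentElem_one_sub_one_sub_pow_pow a m hm, ?_, ?_⟩
  · -- polynomial divisibility argument
    set P : Polynomial ℤ := 1 - (1 - Polynomial.X ^ m) ^ m with hP
    have H₁ : (Polynomial.X : Polynomial ℤ) ∣ P := by
      have h1 : ((1 : Polynomial ℤ) - (1 - Polynomial.X ^ m)) ∣
          1 ^ m - (1 - Polynomial.X ^ m) ^ m := sub_dvd_pow_sub_pow _ _ m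
      simp only [sub_sub_cancel, one_pow] at h1
      exact dvd_trans (dvd_pow_self _ (Nat.succ_ne_zero n)) h1
    have H₂ : ((1 : Polynomial ℤ) - Polynomial.X) ∣ 1 - P := by
      have h1 : ((1 : Polynomial ℤ) - Polynomial.X) ∣ 1 ^ m - Polynomial.X ^ m :=
        sub_dvd_pow_sub_pow _ _ m
      simp only [one_pow] at h1
      have h2 : ((1 : Polynomial ℤ) - Polynomial.X ^ m) ∣ (1 - Polynomial.X ^ m) ^ m :=
        dvd_pow_self _ (Nat.succ_ne_zero n)
      have : (1 : Polynomial ℤ) - P = (1 - Polynomial.X ^ m) ^ m := by rw [hP]; ring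
      rw [this]
      exact h1.trans h2
    have hdvd : (Polynomial.X - Polynomial.X ^ 2 : Polynomial ℤ) ∣ Polynomial.X - P := by
      have heq : (Polynomial.X : Polynomial ℤ) - P =
          Polynomial.X * (1 - P) - P * (1 - Polynomial.X) := by ring
      have heq2 : (Polynomial.X - Polynomial.X ^ 2 : Polynomial ℤ) =
          Polynomial.X * (1 - Polynomial.X) := by ring
      rw [heq, heq2]
      exact dvd_sub (mul_dvd_mul_left _ H₂) (mul_dvd_mul H₁ dvd_rfl)
    obtain ⟨Q, hQ⟩ := hdvd
    have := congrArg (Polynomial.aeval a) hQ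
    simp only [map_sub, map_mul, map_pow, map_one, Polynomial.aeval_X, hP] at this
    rw [this]
    have hcomm : Commute (a - a ^ 2) (Polynomial.aeval a Q) := by
      have := (Commute.all (Polynomial.X - Polynomial.X ^ 2 : Polynomial ℤ) Q).map
        (Polynomial.aeval a).toRingHom
      simpa using this
    exact hcomm.isNilpotent_mul_right ⟨n, hn⟩
  · intro y hy
    exact (Commute.one_right y).sub_right
      (((Commute.one_right y).sub_right (hy.pow_right m)).pow_right m)

theorem stmt_1 (R : Type*) [Ring R] :
    IsCSNCRing R ↔
      ∀ a : R, IsCleanElem a →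
        ∃! e : R, IsIdempotentElem e ∧ IsNilpotent (a - e) ∧ a * e = e * a := by
  constructor
  · intro hR a ha
    obtain ⟨e, q, he, hq, hcomm, rfl⟩ := hR a ha
    have hae : (e + q) * e = e * (e + q) := by
      rw [add_mul, mul_add, he.eq, hcomm]
    have haq : IsNilpotent (e + q - e) := by simpa using hq
    -- the canonical idempotent
    have hec : Commute e q := hcomm
    have hqe : Commute q e := hec.symm
    have hnil : IsNilpotent (e + q - (e + q) ^ 2) := by
      have key : e + q - (e + q) ^ 2 = (e + q - e) * (1 - (e + q) - e) := by
        rw [pow_two, show e + q - e = q from by abel]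
        simp only [mul_add, add_mul, mul_sub, sub_mul, mul_one, one_mul, he.eq, hcomm]
        abel
      rw [key]
      have hc : Commute (e + q - e) (1 - (e + q) - e) := by
        rw [show e + q - e = q from by abel]
        exact ((Commute.one_right q).sub_right (hqe.add_right (Commute.refl q))).sub_right hqe
      exact hc.isNilpotent_mul_right haq
    obtain ⟨g, hg, hag, hgc⟩ := exists_canonical_idem (e + q) hnil
    have heg : e = g := by
      have hce : Commute e (e + q) := (Commute.refl e).add_right hec
      have hcg : Commute e g := hgc e hce
      refine eq_of_isNilpotent_sub_of_isIdempotentElem_of_commute he hg ?_ hcg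
      have : e - g = (e + q - g) - (e + q - e) := by abel
      rw [this]
      have hc2 : Commute (e + q - g) (e + q - e) := by
        have h1 : Commute g (e + q) := (hgc (e+q) (Commute.refl _)).symm
        have h2 : Commute g e := (hgc e hce).symm
        have h3 : Commute (e + q) e := hce.symm
        exact ((Commute.refl (e+q)).sub_left h1).sub_right ((h3).sub_left h2)
      exact hc2.isNilpotent_sub hag haq
    refine ⟨e, ⟨he, haq, hae⟩, ?_⟩
    rintro f ⟨hf, hfn, hfc⟩
    have hfg : f = g := by
      have hcf' : Commute f (e + q) := (show Commute (e + q) f from hfc).symm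
      refine eq_of_isNilpotent_sub_of_isIdempotentElem_of_commute hf hg ?_ (hgc f hcf')
      have : f - g = (e + q - g) - (e + q - f) := by abel
      rw [this]
      have h1 : Commute g (e + q) := (hgc (e+q) (Commute.refl _)).symm
      have h2 : Commute g f := (hgc f hcf').symm
      have hc2 : Commute (e + q - g) (e + q - f) :=
        ((Commute.refl (e+q)).sub_left h1).sub_right (hcf'.symm.sub_left h2)
      exact hc2.isNilpotent_sub hag hfn
    rw [hfg, heg]
  · intro hR a ha
    obtain ⟨e, ⟨he, hn, hc⟩, -⟩ := hR a ha
    refine ⟨e, a - e, he, hn, ?_, by abel⟩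
    rw [mul_sub, sub_mul, ← hc, he.eq]
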